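/- Let (\{f_n\},\{τ_n\}) and (\{g_n\},\{ω_n\}) be approximately dual p-ABSs for X. For N ∈ ℕ define ρ_n^{(N)} := Σ_{m=0}^N (I_X − S_{f,ω})^m ω_n. Then the operator θ_ρ^{(N)} θ_f (x ↦ Σ_n f_n(x) ρ_n^{(N)}) satisfies θ_ρ^{(N)} θ_f x = x − (I_X − S_{f,ω})^{N+1} x for all x, and hence ‖I_X − θ_ρ^{(N)} θ_f‖ ≤ ‖I_X − S_{f,ω}‖^{N+1} → 0 as N → ∞. -/
import Mathlib


open scoped ENNReal
open Filter Topology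

noncomputable section

/-- The sequence space `ℓ^p(ℕ)` over `ℝ`. -/
abbrev lpN (p : ℝ≥0∞) := lp (fun _ : ℕ => ℝ) p

/-- A pair `({f_n}, {τ_n})` is a p-approximate Bessel sequence (p-ABS) for `X`:
the analysis map `x ↦ (f_n x)_n` is a well-defined bounded linear operator into `ℓ^p`,
and the synthesis map `(a_n) ↦ Σ a_n τ_n` is a well-defined bounded linear operator. -/
def IsPABS (p : ℝ≥0∞) [Fact (1 ≤ p)] {X : Type*} [NormedAddCommGroup X] [NormedSpace ℝ X]
    (f : ℕ → X →L[ℝ] ℝ) (τ : ℕ → X) : Prop :=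
  (∃ θf : X →L[ℝ] lpN p, ∀ (x : X) (n : ℕ), (θf x) n = f n x) ∧
  (∃ θτ : lpN p →L[ℝ] X, ∀ a : lpN p, HasSum (fun n => (a n) • τ n) (θτ a))

/-- A pair `({f_n}, {τ_n})` is a p-approximate Schauder frame (p-ASF) for `X`:
it is a p-ABS whose frame operator `S_{f,τ} = θ_τ ∘ θ_f` is bounded invertible. -/
def IsPASF (p : ℝ≥0∞) [Fact (1 ≤ p)] {X : Type*} [NormedAddCommGroup X] [NormedSpace ℝ X]
    (f : ℕ → X →L[ℝ] ℝ) (τ : ℕ → X) : Prop :=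
  ∃ (θf : X →L[ℝ] lpN p) (θτ : lpN p →L[ℝ] X) (S : X ≃L[ℝ] X),
    (∀ (x : X) (n : ℕ), (θf x) n = f n x) ∧
    (∀ a : lpN p, HasSum (fun n => (a n) • τ n) (θτ a)) ∧
    (S : X →L[ℝ] X) = θτ.comp θf
/-- with `ρ_n^{(N)} := Σ_{m=0}^N (I - S_{f,ω})^m ω_n`, one has
`θ_ρ^{(N)} θ_f x = x - (I - S_{f,ω})^{N+1} x`, hence
`‖I - θ_ρ^{(N)} θ_f‖ ≤ ‖I - S_{f,ω}‖^{N+1} → 0`. -/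
theorem approx_dual_iteration_synthesis
    {X : Type*} [NormedAddCommGroup X] [NormedSpace ℝ X] [CompleteSpace X]
    (p : ℝ≥0∞) [Fact (1 ≤ p)] (hp : p ≠ ∞)
    (f g : ℕ → X →L[ℝ] ℝ) (τ ω : ℕ → X)
    (θf θg : X →L[ℝ] lpN p) (θτ θω : lpN p →L[ℝ] X)
    (hθf : ∀ (x : X) (n : ℕ), (θf x) n = f n x)
    (hθg : ∀ (x : X) (n : ℕ), (θg x) n = g n x)
    (hθτ : ∀ a : lpN p, HasSum (fun n => (a n) • τ n) (θτ a))
    (hθω : ∀ a : lpN p, HasSum (fun n => (a n) • ω n) (θω a))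
    (h1 : ‖ContinuousLinearMap.id ℝ X - θω.comp θf‖ < 1)
    (h2 : ‖ContinuousLinearMap.id ℝ X - θτ.comp θg‖ < 1) :
    (∀ N : ℕ,
      (∀ x : X,
        HasSum
          (fun n => f n x •
            ((∑ m ∈ Finset.range (N + 1),
              (ContinuousLinearMap.id ℝ X - θω.comp θf) ^ m) (ω n)))
          (x - ((ContinuousLinearMap.id ℝ X - θω.comp θf) ^ (N + 1)) x)) ∧
      ‖ContinuousLinearMap.id ℝ X -
        (∑ m ∈ Finset.range (N + 1),
          (ContinuousLinearMap.id ℝ X - θω.comp θf) ^ m).comp (θω.comp θf)‖ ≤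
        ‖ContinuousLinearMap.id ℝ X - θω.comp θf‖ ^ (N + 1)) ∧
    Tendsto (fun N : ℕ => ‖ContinuousLinearMap.id ℝ X - θω.comp θf‖ ^ (N + 1))
      atTop (nhds 0) := by
  set T := ContinuousLinearMap.id ℝ X - θω.comp θf with hT
  have key : ∀ N : ℕ, (∑ m ∈ Finset.range (N + 1), T ^ m).comp (θω.comp θf)
      = ContinuousLinearMap.id ℝ X - T ^ (N + 1) := by
    intro N
    have h : θω.comp θf = 1 - T := by
      simp only [hT, ← ContinuousLinearMap.one_def]
      abel
    have := geom_sum_mul T (N + 1)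
    calc (∑ m ∈ Finset.range (N + 1), T ^ m).comp (θω.comp θf)
        = (∑ m ∈ Finset.range (N + 1), T ^ m) * (1 - T) := by rw [h]; rfl
      _ = -((∑ m ∈ Finset.range (N + 1), T ^ m) * (T - 1)) := by
          rw [← neg_sub T 1, mul_neg]
      _ = -(T ^ (N + 1) - 1) := by rw [geom_sum_mul]
      _ = ContinuousLinearMap.id ℝ X - T ^ (N + 1) := by
          rw [neg_sub, ← ContinuousLinearMap.one_def]
  refine ⟨fun N => ⟨fun x => ?_, ?_⟩, ?_⟩
  · have hs : HasSum (fun n => (θf x) n • ω n) (θω (θf x)) := hθω (θf x)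
    have hs2 := hs.mapL (∑ m ∈ Finset.range (N + 1), T ^ m)
    simp only [map_smul] at hs2
    have heq : (∑ m ∈ Finset.range (N + 1), T ^ m) (θω (θf x))
        = x - (T ^ (N + 1)) x := by
      have := congrArg (fun (A : X →L[ℝ] X) => A x) (key N)
      simpa using this
    rw [heq] at hs2
    convert hs2 using 2 with n
    rw [hθf]
  · rw [key N]
    have : ContinuousLinearMap.id ℝ X - (ContinuousLinearMap.id ℝ X - T ^ (N + 1))
        = T ^ (N + 1) := by abel
    rw [this]
    exact norm_pow_le' T N.succ_pos
  · have h0 : Tendsto (fun n : ℕ => ‖T‖ ^ n) atTop (nhds 0) :=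
      tendsto_pow_atTop_nhds_zero_of_lt_one (norm_nonneg T) h1
    exact h0.comp (tendsto_add_atTop_nat 1)
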